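/- A minimal valid function π is a facet if and only if for every minimal valid function π', the inclusion E(π) ⊆ E(π') implies π' = π. -/

import Mathlib

/-- A finite-support function `y : ℝ → ℕ` is feasible if `∑ r, r·y(r) − f ∈ ℤ`. -/
def Feasible (f : ℝ) (y : ℝ →₀ ℕ) : Prop :=
  ∃ z : ℤ, (∑ r ∈ y.support, r * (y r : ℝ)) - f = (z : ℝ)

/-- `π` is a valid function: nonnegative, and `∑ r, π(r)·y(r) ≥ 1` for every feasible `y`. -/
def Valid (f : ℝ) (π : ℝ → ℝ) : Prop :=
  (∀ x, 0 ≤ π x) ∧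
    ∀ y : ℝ →₀ ℕ, Feasible f y → 1 ≤ ∑ r ∈ y.support, π r * (y r : ℝ)

/-- A valid function is minimal if no other valid function is pointwise ≤ it. -/
def MinimalValid (f : ℝ) (π : ℝ → ℝ) : Prop :=
  Valid f π ∧ ¬ ∃ π' : ℝ → ℝ, Valid f π' ∧ (∀ x, π' x ≤ π x) ∧ π' ≠ π

/-- `P(π)`: the set of feasible `y` with `∑ r, π(r)·y(r) = 1`. -/
def Pset (f : ℝ) (π : ℝ → ℝ) : Set (ℝ →₀ ℕ) :=
  {y | Feasible f y ∧ ∑ r ∈ y.support, π r * (y r : ℝ) = 1}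

/-- `E(π) = {(x,y) : π(x) + π(y) = π(x+y)}`. -/
def Eset (π : ℝ → ℝ) : Set (ℝ × ℝ) :=
  {p | π p.1 + π p.2 = π (p.1 + p.2)}

/-- A valid function `π` is a facet if every valid `π'` with `P(π) ⊆ P(π')` equals `π`. -/
def IsFacet (f : ℝ) (π : ℝ → ℝ) : Prop :=
  Valid f π ∧ ∀ π' : ℝ → ℝ, Valid f π' → Pset f π ⊆ Pset f π' → π' = π

/-- A valid function `π` is a weak facet if every valid `π'` with `P(π) ⊆ P(π')`
has `P(π) = P(π')`. -/
def IsWeakFacet (f : ℝ) (π : ℝ → ℝ) : Prop :=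
  Valid f π ∧ ∀ π' : ℝ → ℝ, Valid f π' → Pset f π ⊆ Pset f π' → Pset f π = Pset f π'

/-- A valid function `π` is extreme if whenever `π = (π¹ + π²)/2` with `π¹, π²` valid,
then `π¹ = π² = π`. -/
def ExtremeFunc (f : ℝ) (π : ℝ → ℝ) : Prop :=
  Valid f π ∧ ∀ π₁ π₂ : ℝ → ℝ, Valid f π₁ → Valid f π₂ →
    (∀ x, π x = (π₁ x + π₂ x) / 2) → π₁ = π ∧ π₂ = π

/-- `π` is piecewise linear: there is a closed, discrete set `B ⊆ ℝ` of breakpoints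
such that `π` is affine on each connected component of `ℝ \ B`. -/
def PiecewiseLinear (π : ℝ → ℝ) : Prop :=
  ∃ B : Set ℝ, IsClosed B ∧
    (∀ x ∈ B, ∃ ε > (0 : ℝ), ∀ y ∈ B, |y - x| < ε → y = x) ∧
    (∀ x ∉ B, ∃ a b : ℝ, ∀ z ∈ connectedComponentIn Bᶜ x, π z = a * z + b)

/-- `π` is continuous piecewise linear. -/
def ContPiecewiseLinear (π : ℝ → ℝ) : Prop :=
  PiecewiseLinear π ∧ Continuous π

open Classical
noncomputable section
def msum (g : ℝ → ℝ) (s : Multiset ℝ) : ℝ := (s.map g).sum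

@[simp] lemma msum_zero (g : ℝ → ℝ) : msum g 0 = 0 := rfl
@[simp] lemma msum_cons (g : ℝ → ℝ) (a : ℝ) (s : Multiset ℝ) :
    msum g (a ::ₘ s) = g a + msum g s := by simp [msum]
@[simp] lemma msum_add (g : ℝ → ℝ) (s t : Multiset ℝ) :
    msum g (s + t) = msum g s + msum g t := by simp [msum]
@[simp] lemma msum_singleton (g : ℝ → ℝ) (a : ℝ) : msum g {a} = g a := by simp [msum]

lemma msum_nsmul (g : ℝ → ℝ) (n : ℕ) (s : Multiset ℝ) :
    msum g (n • s) = n * msum g s := by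
  induction n with
  | zero => simp
  | succ k ih => rw [succ_nsmul, msum_add, ih]; push_cast; ring

lemma sum_nsmul' (n : ℕ) (s : Multiset ℝ) : (n • s).sum = n * s.sum := by
  induction n with
  | zero => simp
  | succ k ih => rw [succ_nsmul, Multiset.sum_add, ih]; push_cast; ring

lemma msum_nonneg {g : ℝ → ℝ} (hg : ∀ x, 0 ≤ g x) (s : Multiset ℝ) : 0 ≤ msum g s :=
  Multiset.sum_nonneg (by intro x hx; obtain ⟨a, _, rfl⟩ := Multiset.mem_map.1 hx; exact hg a)

lemma fsum_eq (g : ℝ → ℝ) (y : ℝ →₀ ℕ) :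
    (∑ r ∈ y.support, g r * (y r : ℝ)) = msum g y.toMultiset := by
  induction y using Finsupp.induction with
  | zero => simp
  | single_add a b yy ha hb ih =>
      rw [Finsupp.toMultiset_add, msum_add, ← ih, Finsupp.toMultiset_single]
      have h1 : (∑ r ∈ ((Finsupp.single a b) + yy).support, g r * ((((Finsupp.single a b) + yy)) r : ℝ))
          = Finsupp.sum ((Finsupp.single a b) + yy) (fun r n => g r * (n : ℝ)) := rfl
      rw [h1, Finsupp.sum_add_index (by simp) (by intros; push_cast; ring)]
      have h2 : Finsupp.sum (Finsupp.single a b) (fun r n => g r * (n : ℝ)) = g a * b :=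
        Finsupp.sum_single_index (by simp)
      have h3 : msum g (b • {a}) = b * g a := by rw [msum_nsmul]; simp
      rw [h2, h3]
      have : Finsupp.sum yy (fun r n => g r * (n : ℝ)) = ∑ r ∈ yy.support, g r * (yy r : ℝ) := rfl
      rw [this]; ring

def MFeasible (f : ℝ) (s : Multiset ℝ) : Prop := ∃ z : ℤ, s.sum - f = (z : ℝ)

lemma feasible_toMultiset (f : ℝ) (y : ℝ →₀ ℕ) : Feasible f y ↔ MFeasible f y.toMultiset := by
  unfold Feasible MFeasible
  rw [show (∑ r ∈ y.support, r * (y r : ℝ)) = msum id y.toMultiset from fsum_eq id y]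
  simp [msum]

lemma valid_iff (f : ℝ) (π : ℝ → ℝ) :
    Valid f π ↔ ((∀ x, 0 ≤ π x) ∧ ∀ s : Multiset ℝ, MFeasible f s → 1 ≤ msum π s) := by
  constructor
  · rintro ⟨h0, h1⟩
    refine ⟨h0, fun s hs => ?_⟩
    have := h1 s.toFinsupp (by rw [feasible_toMultiset, Multiset.toFinsupp_toMultiset]; exact hs)
    rwa [fsum_eq, Multiset.toFinsupp_toMultiset] at this
  · rintro ⟨h0, h1⟩
    exact ⟨h0, fun y hy => by rw [fsum_eq]; exact h1 _ ((feasible_toMultiset f y).1 hy)⟩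

section Core
variable {f : ℝ} {π : ℝ → ℝ}

lemma minimal_forces (hπ : MinimalValid f π) {π' : ℝ → ℝ} (h1 : Valid f π')
    (h2 : ∀ x, π' x ≤ π x) : π' = π := by
  by_contra hne
  exact hπ.2 ⟨π', h1, h2, hne⟩

lemma class_sum (xh : ℝ) : ∀ t : Multiset ℝ, (∀ e ∈ t, ∃ z : ℤ, e - xh = (z:ℝ)) →
    ∃ z : ℤ, t.sum - t.card * xh = (z:ℝ) := by
  intro t
  induction t using Multiset.induction with
  | empty => intro _; exact ⟨0, by simp⟩
  | cons a t ih =>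
      intro h
      obtain ⟨za, ha⟩ := h a (Multiset.mem_cons_self a t)
      obtain ⟨zt, ht⟩ := ih (fun e he => h e (Multiset.mem_cons_of_mem he))
      refine ⟨za + zt, ?_⟩
      rw [Multiset.sum_cons, Multiset.card_cons]
      push_cast
      linarith [ha, ht]

lemma cap (hπ : MinimalValid f π) (xh c : ℝ) (hc : 0 ≤ c)
    (H : ∀ (m : ℕ) (t : Multiset ℝ), 1 ≤ m → (∃ z : ℤ, t.sum - (f - m * xh) = (z:ℝ)) →
      1 ≤ m * c + msum π t) :
    π xh ≤ c := by
  by_contra hlt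
  push_neg at hlt
  classical
  set Cnd : ℝ → Prop := fun u => (∃ z : ℤ, u - xh = (z:ℝ)) ∧ c < π u with hCnd
  set π' : ℝ → ℝ := fun u => if Cnd u then c else π u with hπ'
  have hle : ∀ x, π' x ≤ π x := by
    intro x; rw [hπ']; dsimp only; split
    · next h => exact le_of_lt h.2
    · exact le_rfl
  have hxh : π' xh = c := by
    rw [hπ']; dsimp only
    rw [if_pos ⟨⟨0, by simp⟩, hlt⟩]
  have hvalid : Valid f π' := by
    rw [valid_iff]
    constructor
    · intro x; rw [hπ']; dsimp only; split
      · exact hc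
      · exact hπ.1.1 x
    · intro s hs
      set t₁ := s.filter Cnd with ht₁
      set t₂ := s.filter (fun u => ¬ Cnd u) with ht₂
      have hsplit : t₁ + t₂ = s := Multiset.filter_add_not Cnd s
      have hmsum1 : msum π' t₁ = t₁.card * c := by
        unfold msum
        rw [Multiset.map_congr rfl (fun x hx => ?_), Multiset.map_const', Multiset.sum_replicate,
          nsmul_eq_mul]
        · rw [hπ']; dsimp only; rw [if_pos (Multiset.mem_filter.1 hx).2]
      have hmsum2 : msum π' t₂ = msum π t₂ := by
        unfold msum
        rw [Multiset.map_congr rfl (fun x hx => ?_)]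
        rw [hπ']; dsimp only; rw [if_neg (Multiset.mem_filter.1 hx).2]
      have hdecomp : msum π' s = t₁.card * c + msum π t₂ := by
        rw [← hsplit, msum_add, hmsum1, hmsum2]
      rw [hdecomp]
      rcases Nat.eq_zero_or_pos t₁.card with h0 | hpos
      · have : t₁ = 0 := Multiset.card_eq_zero.1 h0
        rw [this] at hsplit
        simp only [zero_add] at hsplit
        rw [h0]
        simp only [Nat.cast_zero, zero_mul, zero_add]
        have := ((valid_iff f π).1 hπ.1).2 s hs
        rw [hsplit]
        exact this
      · obtain ⟨z1, hz1⟩ := class_sum xh t₁ (fun e he => (Multiset.of_mem_filter he).1)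
        obtain ⟨zs, hzs⟩ := hs
        have hsum : s.sum = t₁.sum + t₂.sum := by rw [← hsplit, Multiset.sum_add]
        refine H t₁.card t₂ hpos ⟨zs - z1, ?_⟩
        push_cast
        rw [hsum] at hzs
        linarith [hz1, hzs]
  have := minimal_forces hπ hvalid hle
  rw [funext_iff] at this
  have h2 := this xh
  rw [hxh] at h2
  exact absurd h2 (ne_of_lt hlt)

lemma master (hπ : MinimalValid f π) (s₀ : Multiset ℝ) (x : ℝ) (hx : ∃ z : ℤ, s₀.sum - x = (z:ℝ)) :
    π x ≤ msum π s₀ := by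
  refine cap hπ x (msum π s₀) (msum_nonneg hπ.1.1 s₀) ?_
  intro m t hm ht
  obtain ⟨z1, hz1⟩ := hx
  obtain ⟨z2, hz2⟩ := ht
  have hfeas : MFeasible f (t + m • s₀) := by
    refine ⟨z2 + m * z1, ?_⟩
    rw [Multiset.sum_add, sum_nsmul']
    push_cast
    nlinarith [hz1, hz2]
  have := ((valid_iff f π).1 hπ.1).2 _ hfeas
  rw [msum_add, msum_nsmul] at this
  linarith
end Core

section Cor
variable {f : ℝ} {π : ℝ → ℝ}

lemma pi_int_zero (hπ : MinimalValid f π) (z : ℤ) : π z = 0 := by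
  have h1 : π z ≤ msum π 0 := master hπ 0 z ⟨-z, by simp⟩
  simpa using le_antisymm (by simpa using h1) (hπ.1.1 _)

lemma pi_subadd (hπ : MinimalValid f π) (a b : ℝ) : π (a + b) ≤ π a + π b := by
  have := master hπ (a ::ₘ {b}) (a + b) ⟨0, by simp⟩
  simpa using this

lemma pi_periodic (hπ : MinimalValid f π) (x : ℝ) (z : ℤ) : π (x + z) = π x := by
  have h1 : π (x + z) ≤ msum π {x} :=
    master hπ {x} (x + z) ⟨-z, by rw [Multiset.sum_singleton]; push_cast; ring⟩
  have h2 : π x ≤ msum π {x + z} :=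
    master hπ {x + z} x ⟨z, by rw [Multiset.sum_singleton]; push_cast; ring⟩
  simp only [msum_singleton] at h1 h2
  linarith

lemma pi_le_one (hπ : MinimalValid f π) (x : ℝ) : π x ≤ 1 := by
  refine cap hπ x 1 zero_le_one ?_
  intro m t hm ht
  have h1 : (1:ℝ) ≤ (m:ℝ) := by exact_mod_cast hm
  nlinarith [msum_nonneg hπ.1.1 t]

lemma pi_f_one (hπ : MinimalValid f π) : π f = 1 := by
  have h1 := ((valid_iff f π).1 hπ.1).2 {f} ⟨0, by simp⟩
  simp only [msum_singleton] at h1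
  exact le_antisymm (pi_le_one hπ f) h1

lemma pi_sym_ge (hπ : MinimalValid f π) (x : ℝ) : 1 ≤ π x + π (f - x) := by
  have h1 := ((valid_iff f π).1 hπ.1).2 (x ::ₘ {f - x}) ⟨0, by rw [Multiset.sum_cons]; simp⟩
  simpa using h1

lemma pi_subadd_nsmul (hπ : MinimalValid f π) (u c : ℝ) (n : ℕ) :
    π (u + n * c) ≤ π u + n * π c := by
  induction n with
  | zero => simp
  | succ k ih =>
      have h1 : u + ((k:ℝ) + 1) * c = (u + k * c) + c := by ring
      push_cast
      rw [h1]
      have := pi_subadd hπ (u + k * c) c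
      linarith

lemma pi_symmetric (hπ : MinimalValid f π) (x : ℝ) : π x + π (f - x) = 1 := by
  refine le_antisymm ?_ (pi_sym_ge hπ x)
  by_contra hgt
  push_neg at hgt
  by_cases hcase : ∀ k : ℕ, 1 ≤ k → 1 - k * (1 - π x) ≤ π (f - k * (f - x))
  · have hb : π (f - x) ≤ 1 - π x := by
      refine cap hπ (f - x) (1 - π x) (by linarith [pi_le_one hπ x]) ?_
      intro m tt hm htt
      have h1 := master hπ tt (f - m * (f - x)) (by
        obtain ⟨z, hz⟩ := htt; exact ⟨z, by linarith [hz]⟩)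
      have h2 := hcase m hm
      linarith
    linarith
  · push_neg at hcase
    obtain ⟨k, hk1, hk2⟩ := hcase
    have hk2' : 2 ≤ k := by
      by_contra hcon
      push_neg at hcon
      interval_cases k
      · have hx1 : f - ((1:ℕ):ℝ) * (f - x) = x := by push_cast; ring
        rw [hx1] at hk2
        push_cast at hk2
        linarith
    have hkR : (2:ℝ) ≤ (k:ℝ) := by exact_mod_cast hk2'
    have hkpos : (0:ℝ) < k := by linarith
    have hQ0 : 0 ≤ π (f - k * (f - x)) := hπ.1.1 _
    set Q := π (f - (k:ℝ) * (f - x)) with hQdef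
    set b : ℝ := ((k:ℝ) - 1 + Q) / k with hb
    have hkb : (k:ℝ) * b = (k:ℝ) - 1 + Q := by
      rw [hb]; field_simp
    have hb0 : 0 ≤ b := by
      rw [hb]; apply div_nonneg <;> linarith
    have hbs : b < π x := by
      rw [hb, div_lt_iff₀ hkpos]
      nlinarith [hk2]
    have hcap : π x ≤ b := by
      refine cap hπ x b hb0 ?_
      intro m tt hm htt
      have hP := master hπ tt (f - m * x) (by
        obtain ⟨z, hz⟩ := htt; exact ⟨z, by linarith [hz]⟩)
      set P := π (f - (m:ℝ) * x) with hPdef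
      have hm1 : (1:ℝ) ≤ (m:ℝ) := by exact_mod_cast hm
      have hpair : (k:ℝ) + m - k * m ≤ (k:ℝ) * P + m * Q := by
        rcases eq_or_lt_of_le hm1 with heq | hgt2
        · -- m = 1
          have h3 := pi_subadd_nsmul hπ (f - k * (f - x)) (f - x) k
          have h4 : f - (k:ℝ) * (f - x) + (k:ℝ) * (f - x) = f := by ring
          rw [h4, pi_f_one hπ] at h3
          have hmx : f - (m:ℝ) * x = f - x := by rw [← heq]; ring
          have hPt : P = π (f - x) := by rw [hPdef, hmx]
          nlinarith [hπ.1.1 (f - x)]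
        · have hm2 : (2:ℝ) ≤ (m:ℝ) := by
            have : (1:ℕ) < m := by exact_mod_cast hgt2
            have : (2:ℕ) ≤ m := this
            exact_mod_cast this
          have hP0 : 0 ≤ P := hπ.1.1 _
          nlinarith
      have h5 : (k:ℝ) * (1 - m * b) ≤ (k:ℝ) * P := by nlinarith [hpair, hkb]
      have h6 : 1 - (m:ℝ) * b ≤ P := le_of_mul_le_mul_left h5 hkpos
      linarith [hP]
    linarith
end Cor

section Main
variable {f : ℝ} {π : ℝ → ℝ}

lemma pi_zero_zero (hπ : MinimalValid f π) : π 0 = 0 := by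
  have := pi_int_zero hπ 0
  simpa using this

lemma msum_ge_pi_sum (hπ : MinimalValid f π) :
    ∀ s : Multiset ℝ, π s.sum ≤ msum π s := by
  intro s
  induction s using Multiset.induction with
  | empty => simp [pi_zero_zero hπ]
  | cons a t ih =>
      rw [Multiset.sum_cons, msum_cons]
      calc π (a + t.sum) ≤ π a + π t.sum := pi_subadd hπ a t.sum
        _ ≤ π a + msum π t := by linarith

lemma chain {π' : ℝ → ℝ} (hπ : MinimalValid f π) (hπ' : MinimalValid f π')
    (hE : Eset π ⊆ Eset π') :
    ∀ s : Multiset ℝ, msum π s = π s.sum → msum π' s = π' s.sum := by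
  intro s
  induction s using Multiset.induction with
  | empty => intro _; simp [pi_zero_zero hπ']
  | cons a t ih =>
      intro h
      rw [Multiset.sum_cons, msum_cons] at h ⊢
      have h1 : π (a + t.sum) ≤ π a + π t.sum := pi_subadd hπ a t.sum
      have h2 : π t.sum ≤ msum π t := msum_ge_pi_sum hπ t
      have h3 : msum π t = π t.sum := by linarith
      have h4 : π a + π t.sum = π (a + t.sum) := by linarith
      have h5 : π' a + π' t.sum = π' (a + t.sum) := hE (show (a, t.sum) ∈ Eset π from h4)
      rw [ih h3, h5]

lemma mem_Pset_iff (y : ℝ →₀ ℕ) :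
    y ∈ Pset f π ↔ (MFeasible f y.toMultiset ∧ msum π y.toMultiset = 1) := by
  unfold Pset
  rw [Set.mem_setOf_eq, feasible_toMultiset, fsum_eq]

lemma mem_Pset_toFinsupp (s : Multiset ℝ) :
    s.toFinsupp ∈ Pset f π ↔ (MFeasible f s ∧ msum π s = 1) := by
  rw [mem_Pset_iff, Multiset.toFinsupp_toMultiset]
end Main

theorem stmt1 (f : ℝ) (hf : f ∈ Set.Ioo (0 : ℝ) 1) (π : ℝ → ℝ)
    (hπ : MinimalValid f π) :
    IsFacet f π ↔ ∀ π' : ℝ → ℝ, MinimalValid f π' → Eset π ⊆ Eset π' → π' = π := by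
  constructor
  · intro hfacet π' hπ' hE
    refine hfacet.2 π' hπ'.1 ?_
    intro y hy
    rw [mem_Pset_iff] at hy ⊢
    obtain ⟨hfeas, hsum⟩ := hy
    refine ⟨hfeas, ?_⟩
    obtain ⟨z, hz⟩ := hfeas
    have hsumval : y.toMultiset.sum = f + z := by linarith
    have hπsum : π y.toMultiset.sum = 1 := by
      rw [hsumval, pi_periodic hπ f z, pi_f_one hπ]
    have hπ'sum : π' y.toMultiset.sum = 1 := by
      rw [hsumval]
      have := pi_periodic hπ' f z
      rw [this, pi_f_one hπ']
    have := chain hπ hπ' hE y.toMultiset (by rw [hπsum, hsum])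
    rw [this, hπ'sum]
  · intro H
    refine ⟨hπ.1, ?_⟩
    intro π'' hval hP
    -- the two-point solutions lie in Pset π
    have htwo : ∀ x : ℝ, (x ::ₘ {f - x}).toFinsupp ∈ Pset f π := by
      intro x
      rw [mem_Pset_toFinsupp]
      constructor
      · exact ⟨0, by rw [Multiset.sum_cons, Multiset.sum_singleton]; push_cast; ring⟩
      · rw [msum_cons, msum_singleton]
        exact pi_symmetric hπ x
    have hsym'' : ∀ x : ℝ, π'' x + π'' (f - x) = 1 := by
      intro x
      have := hP (htwo x)
      rw [mem_Pset_toFinsupp] at this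
      have h2 := this.2
      rwa [msum_cons, msum_singleton] at h2
    -- π'' is minimal
    have hmin'' : MinimalValid f π'' := by
      refine ⟨hval, ?_⟩
      rintro ⟨ψ, hψv, hψle, hψne⟩
      apply hψne
      funext x
      have h1 : 1 ≤ ψ x + ψ (f - x) := by
        have := ((valid_iff f ψ).1 hψv).2 (x ::ₘ {f - x})
          ⟨0, by rw [Multiset.sum_cons, Multiset.sum_singleton]; push_cast; ring⟩
        rwa [msum_cons, msum_singleton] at this
      have h2 := hψle x
      have h3 := hψle (f - x)
      have h4 := hsym'' x
      linarith
    -- E π ⊆ E π''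
    have hE'' : Eset π ⊆ Eset π'' := by
      rintro ⟨u, v⟩ huv
      have huv' : π u + π v = π (u + v) := huv
      have harg : f - u - v = f - (u + v) := by ring
      have hs1 : (u ::ₘ v ::ₘ {f - u - v}).toFinsupp ∈ Pset f π := by
        rw [mem_Pset_toFinsupp]
        constructor
        · refine ⟨0, ?_⟩
          rw [Multiset.sum_cons, Multiset.sum_cons, Multiset.sum_singleton]
          push_cast; ring
        · rw [msum_cons, msum_cons, msum_singleton, harg]
          have := pi_symmetric hπ (u + v)
          linarith [huv']
      have hs2 : ((u + v) ::ₘ {f - u - v}).toFinsupp ∈ Pset f π := by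
        rw [harg]
        exact htwo (u + v)
      have h1 := hP hs1
      have h2 := hP hs2
      rw [mem_Pset_toFinsupp] at h1 h2
      have e1 := h1.2
      have e2 := h2.2
      rw [msum_cons, msum_cons, msum_singleton] at e1
      rw [msum_cons, msum_singleton] at e2
      show π'' u + π'' v = π'' (u + v)
      linarith
    exact H π'' hmin'' hE''
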